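/- Let G be a graph with a vector k-coloring {v_i} (real k > 2), maximum degree Δ, and n vertices. Choose a random Gaussian vector r and a threshold c > 0; let n' be the number of vertices with ⟨v_i, r⟩ ≥ c and m' the number of edges with both endpoints selected. Then E[n' - m'] ≥ n(N(c) - (Δ/2) N(ac)), where a = sqrt(2(k-1)/(k-2)) and N is the standard normal tail. -/

import Mathlib

open MeasureTheory ProbabilityTheory Real
open scoped RealInnerProductSpace Classical ENNReal NNReal


lemma gauss_mul_eq {a b : ℝ≥0} (ha : a ≠ 0) (hb : b ≠ 0) (z x : ℝ) :
    gaussianPDFReal 0 a x * gaussianPDFReal 0 b (z - x) =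
      ((Real.sqrt (2 * π * a))⁻¹ * (Real.sqrt (2 * π * b))⁻¹ * Real.exp (-(z^2) / (2 * ((a:ℝ) + b)))) *
        Real.exp (-(((a:ℝ) + b) / (2 * (a * b))) * (x - a * z / (a + b))^2) := by
  have hA : (0:ℝ) < a := NNReal.coe_pos.mpr ha.bot_lt
  have hB : (0:ℝ) < b := NNReal.coe_pos.mpr hb.bot_lt
  have hAB : (0:ℝ) < (a:ℝ) + b := by linarith
  simp only [gaussianPDFReal, sub_zero]
  rw [show ∀ p q r s : ℝ, (p * q) * (r * s) = (p * r) * (q * s) by intros; ring,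
    mul_assoc ((Real.sqrt (2 * π * a))⁻¹ * (Real.sqrt (2 * π * b))⁻¹),
    ← Real.exp_add, ← Real.exp_add]
  congr 2
  field_simp
  ring

lemma gauss_conv_integrable {a b : ℝ≥0} (ha : a ≠ 0) (hb : b ≠ 0) (z : ℝ) :
    Integrable (fun x => gaussianPDFReal 0 a x * gaussianPDFReal 0 b (z - x)) := by
  have hA : (0:ℝ) < a := NNReal.coe_pos.mpr ha.bot_lt
  have hB : (0:ℝ) < b := NNReal.coe_pos.mpr hb.bot_lt
  have hq : (0:ℝ) < ((a:ℝ) + b) / (2 * (a * b)) := by positivity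
  simp only [fun x => gauss_mul_eq ha hb z x]
  exact (((integrable_exp_neg_mul_sq hq).comp_sub_right ((a:ℝ) * z / (a + b))).const_mul _)

lemma gauss_conv_real {a b : ℝ≥0} (ha : a ≠ 0) (hb : b ≠ 0) (z : ℝ) :
    ∫ x : ℝ, gaussianPDFReal 0 a x * gaussianPDFReal 0 b (z - x) =
      gaussianPDFReal 0 (a + b) z := by
  have hA : (0:ℝ) < a := NNReal.coe_pos.mpr ha.bot_lt
  have hB : (0:ℝ) < b := NNReal.coe_pos.mpr hb.bot_lt
  have hAB : (0:ℝ) < (a:ℝ) + b := by linarith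
  have hq : (0:ℝ) < ((a:ℝ) + b) / (2 * (a * b)) := by positivity
  simp only [fun x => gauss_mul_eq ha hb z x]
  rw [integral_const_mul, integral_sub_right_eq_self (μ := volume) (fun x => Real.exp (-(((a:ℝ) + b) / (2 * (a * b))) * x^2)) ((a:ℝ) * z / (a + b)), integral_gaussian]
  simp only [gaussianPDFReal, sub_zero, NNReal.coe_add]
  have hconst : √(π / (((a:ℝ) + b) / (2 * (a * b)))) =
      √(2 * π * a) * √(2 * π * b) * (√(2 * π * ((a:ℝ) + b)))⁻¹ := by
    rw [← Real.sqrt_mul (by positivity), ← Real.sqrt_inv, ← Real.sqrt_mul (by positivity)]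
    congr 1
    field_simp
  rw [hconst]
  have h1 : √(2 * π * (a:ℝ)) ≠ 0 := by positivity
  have h2 : √(2 * π * (b:ℝ)) ≠ 0 := by positivity
  field_simp

lemma gauss_conv_lintegral {a b : ℝ≥0} (ha : a ≠ 0) (hb : b ≠ 0) (z : ℝ) :
    ∫⁻ x : ℝ, gaussianPDF 0 a x * gaussianPDF 0 b (z - x) = gaussianPDF 0 (a + b) z := by
  simp only [gaussianPDF]
  simp_rw [← ENNReal.ofReal_mul (gaussianPDFReal_nonneg 0 a _)]
  rw [← ofReal_integral_eq_lintegral_ofReal (gauss_conv_integrable ha hb z)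
    (Filter.Eventually.of_forall fun x =>
      mul_nonneg (gaussianPDFReal_nonneg 0 a _) (gaussianPDFReal_nonneg 0 b _)),
    gauss_conv_real ha hb z]

lemma map_eq_zero_ae {Ω : Type*} [MeasurableSpace Ω] {μ : Measure Ω} {X : Ω → ℝ}
    (hX : Measurable X) (h : μ.map X = Measure.dirac 0) : X =ᵐ[μ] 0 := by
  have : μ.map X ({0}ᶜ) = 0 := by rw [h]; simp
  rw [Measure.map_apply hX (MeasurableSet.compl (measurableSet_singleton 0))] at this
  filter_upwards [measure_eq_zero_iff_ae_notMem.mp this] with ω hω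
  simpa using not_not.mp hω

lemma prod_gauss_map_add {a b : ℝ≥0} (ha : a ≠ 0) (hb : b ≠ 0) :
    ((gaussianReal 0 a).prod (gaussianReal 0 b)).map (fun p : ℝ × ℝ => p.1 + p.2) =
      gaussianReal 0 (a + b) := by
  have hmadd : Measurable (fun p : ℝ × ℝ => p.1 + p.2) := measurable_fst.add measurable_snd
  ext s hs
  rw [Measure.map_apply hmadd hs, Measure.prod_apply (hmadd hs)]
  have hinner : ∀ x : ℝ, gaussianReal 0 b (Prod.mk x ⁻¹' ((fun p : ℝ × ℝ => p.1 + p.2) ⁻¹' s)) =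
      ∫⁻ y in s, ENNReal.ofReal (gaussianPDFReal 0 b (y - x)) := by
    intro x
    have hpre : (Prod.mk x ⁻¹' ((fun p : ℝ × ℝ => p.1 + p.2) ⁻¹' s)) = (fun y => x + y) ⁻¹' s := rfl
    rw [hpre, ← Measure.map_apply (measurable_const_add x) hs, gaussianReal_map_const_add,
      zero_add, gaussianReal_apply x hb s]
    congr 1 with y
    rw [gaussianPDF, gaussianPDFReal_sub, zero_add]
  simp_rw [hinner]
  rw [gaussianReal_of_var_ne_zero 0 ha,
    lintegral_withDensity_eq_lintegral_mul _ (measurable_gaussianPDF 0 a)]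
  rotate_left
  · exact Measurable.lintegral_prod_right'
      ((measurable_gaussianPDF 0 b).comp (measurable_snd.sub measurable_fst))
  have key : ∀ x : ℝ, (gaussianPDF 0 a * fun x => ∫⁻ y in s, ENNReal.ofReal (gaussianPDFReal 0 b (y - x))) x
      = ∫⁻ y in s, gaussianPDF 0 a x * gaussianPDF 0 b (y - x) := by
    intro x
    simp only [Pi.mul_apply]
    rw [← lintegral_const_mul' (gaussianPDF 0 a x) _ (by simp [gaussianPDF])]
    rfl
  simp_rw [key]
  rw [lintegral_lintegral_swap]
  · rw [gaussianReal_apply 0 (by simp [ha] : a + b ≠ 0) s]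
    refine setLIntegral_congr_fun hs (fun y _ => ?_)
    exact gauss_conv_lintegral ha hb y
  · exact (((measurable_gaussianPDF 0 a).comp measurable_fst).mul
      ((measurable_gaussianPDF 0 b).comp (measurable_snd.sub measurable_fst))).aemeasurable

lemma indep_gauss_add {Ω : Type*} [MeasurableSpace Ω] {μ : Measure Ω} [IsProbabilityMeasure μ]
    {X Y : Ω → ℝ} (hX : Measurable X) (hY : Measurable Y) (hXY : IndepFun X Y μ)
    {a b : ℝ≥0} (hda : μ.map X = gaussianReal 0 a) (hdb : μ.map Y = gaussianReal 0 b) :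
    μ.map (fun ω => X ω + Y ω) = gaussianReal 0 (a + b) := by
  by_cases ha : a = 0
  · subst ha
    rw [gaussianReal_zero_var] at hda
    have hX0 : X =ᵐ[μ] 0 := map_eq_zero_ae hX hda
    have : (fun ω => X ω + Y ω) =ᵐ[μ] Y := by filter_upwards [hX0] with ω h; simp [h]
    rw [Measure.map_congr this, hdb, zero_add]
  by_cases hb : b = 0
  · subst hb
    rw [gaussianReal_zero_var] at hdb
    have hY0 : Y =ᵐ[μ] 0 := map_eq_zero_ae hY hdb
    have : (fun ω => X ω + Y ω) =ᵐ[μ] X := by filter_upwards [hY0] with ω h; simp [h]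
    rw [Measure.map_congr this, hda, add_zero]
  have hjoint : μ.map (fun ω => (X ω, Y ω)) = (μ.map X).prod (μ.map Y) :=
    (indepFun_iff_map_prod_eq_prod_map_map hX.aemeasurable hY.aemeasurable).mp hXY
  have : (fun ω => X ω + Y ω) = (fun p : ℝ × ℝ => p.1 + p.2) ∘ (fun ω => (X ω, Y ω)) := rfl
  rw [this, ← Measure.map_map (g := fun p : ℝ × ℝ => p.1 + p.2) (measurable_fst.add measurable_snd) (hX.prodMk hY), hjoint,
    hda, hdb, prod_gauss_map_add ha hb]

lemma map_gauss_sum {Ω : Type*} [MeasurableSpace Ω] {μ : Measure Ω} [IsProbabilityMeasure μ]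
    {n : ℕ} {r : Fin n → Ω → ℝ} (hmeas : ∀ i, Measurable (r i))
    (hindep : iIndepFun r μ)
    (hdist : ∀ i, μ.map (r i) = gaussianReal 0 1) (w : Fin n → ℝ) (s : Finset (Fin n)) :
    μ.map (fun ω => ∑ j ∈ s, w j * r j ω) = gaussianReal 0 (∑ j ∈ s, ‖w j‖₊ ^ 2) := by
  set g : Fin n → Ω → ℝ := fun j ω => w j * r j ω with hg
  have hgmeas : ∀ j, Measurable (g j) := fun j => (hmeas j).const_mul _
  have hgindep : iIndepFun g μ :=
    hindep.comp (fun j x => w j * x) (fun j => measurable_const_mul _)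
  have hgdist : ∀ j, μ.map (g j) = gaussianReal 0 (‖w j‖₊ ^ 2) := by
    intro j
    have : g j = (fun x => w j * x) ∘ r j := rfl
    rw [this, ← Measure.map_map (measurable_const_mul _) (hmeas j), hdist j,
      gaussianReal_map_const_mul]
    congr
    · ring
    · ext; push_cast; rw [Real.norm_eq_abs, sq_abs, mul_one]
  classical
  induction s using Finset.induction_on with
  | empty =>
      simp only [Finset.sum_empty]
      rw [Measure.map_const, gaussianReal_zero_var]
      simp
  | insert i s hi ih =>
      have hYmeas : Measurable (fun ω => ∑ j ∈ s, g j ω) :=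
        Finset.measurable_sum s (fun j _ => hgmeas j)
      have hIndep : IndepFun (g i) (fun ω => ∑ j ∈ s, g j ω) μ := by
        have := hgindep.indepFun_finset_sum_of_notMem hgmeas hi
        have hEq : (∑ j ∈ s, g j) = fun ω => ∑ j ∈ s, g j ω := by
          funext ω; simp [Finset.sum_apply]
        rw [hEq] at this
        exact this.symm
      have : (fun ω => ∑ j ∈ insert i s, w j * r j ω)
          = fun ω => g i ω + ∑ j ∈ s, g j ω := by
        funext ω; rw [Finset.sum_insert hi]
      rw [this, Finset.sum_insert hi,
        indep_gauss_add (hgmeas i) hYmeas hIndep (hgdist i) ih]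

lemma gauss_Ici_scale {V : ℝ≥0} (hV : V ≠ 0) (t : ℝ) :
    gaussianReal 0 V (Set.Ici t) = gaussianReal 0 1 (Set.Ici (t / Real.sqrt V)) := by
  have hVpos : (0:ℝ) < V := NNReal.coe_pos.mpr hV.bot_lt
  have hσ : (0:ℝ) < Real.sqrt V := Real.sqrt_pos.mpr hVpos
  have hVeq : (⟨(Real.sqrt V)^2, sq_nonneg _⟩ : ℝ≥0) * 1 = V := by
    ext
    push_cast
    rw [Real.sq_sqrt hVpos.le, mul_one]
    rfl
  have hmap : (gaussianReal 0 1).map (Real.sqrt V * ·) = gaussianReal 0 V := by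
    rw [gaussianReal_map_const_mul, mul_zero]; exact congrArg _ hVeq
  rw [← hmap, Measure.map_apply (measurable_const_mul _) measurableSet_Ici,
    Set.preimage_const_mul_Ici₀ _ hσ]

theorem expected_captured_difference (n : ℕ) (k : ℝ) (hk : 2 < k)
    (G : SimpleGraph (Fin n)) [DecidableRel G.Adj] (Δ : ℕ) (hΔ : G.maxDegree ≤ Δ)
    (v : Fin n → EuclideanSpace ℝ (Fin n)) (hunit : ∀ i, ‖v i‖ = 1)
    (hvc : ∀ i j, G.Adj i j → ⟪v i, v j⟫ ≤ -1 / (k - 1))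
    {Ω : Type*} [MeasurableSpace Ω] (μ : Measure Ω) [IsProbabilityMeasure μ]
    (r : Fin n → Ω → ℝ) (hmeas : ∀ i, Measurable (r i))
    (hindep : iIndepFun r μ)
    (hdist : ∀ i, μ.map (r i) = gaussianReal 0 1)
    (c : ℝ) (hc : 0 < c)
    (N : ℝ → ℝ) (hN : ∀ x, N x = (gaussianReal 0 1 (Set.Ici x)).toReal)
    (n' m' : Ω → ℕ)
    (hn' : ∀ ω, n' ω =
      (Finset.univ.filter (fun i : Fin n => c ≤ ∑ j, v i j * r j ω)).card)
    (hm' : ∀ ω, m' ω =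
      (G.edgeFinset.filter (fun e => ∀ i ∈ e, c ≤ ∑ j, v i j * r j ω)).card) :
    (n : ℝ) * (N c - (Δ : ℝ) / 2 * N (Real.sqrt (2 * (k - 1) / (k - 2)) * c)) ≤
      ∫ ω, ((n' ω : ℝ) - (m' ω : ℝ)) ∂μ := by
  have hk1 : (0:ℝ) < k - 1 := by linarith
  have hk2 : (0:ℝ) < k - 2 := by linarith
  set a : ℝ := Real.sqrt (2 * (k - 1) / (k - 2)) with ha
  -- basic N facts
  have hNnonneg : ∀ x, 0 ≤ N x := fun x => by rw [hN]; exact ENNReal.toReal_nonneg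
  have hNanti : ∀ x y, x ≤ y → N y ≤ N x := fun x y h => by
    rw [hN, hN]
    exact ENNReal.toReal_mono (measure_ne_top _ _)
      (measure_mono (Set.Ici_subset_Ici.mpr h))
  -- key probability identity
  have key : ∀ (w : Fin n → ℝ) (t : ℝ),
      μ {ω | t ≤ ∑ j, w j * r j ω} = gaussianReal 0 (∑ j, ‖w j‖₊ ^ 2) (Set.Ici t) := by
    intro w t
    have hf : Measurable fun ω => ∑ j, w j * r j ω :=
      Finset.measurable_sum _ fun j _ => (hmeas j).const_mul _
    have hset : {ω | t ≤ ∑ j, w j * r j ω} = (fun ω => ∑ j, w j * r j ω) ⁻¹' (Set.Ici t) := rfl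
    rw [hset, ← Measure.map_apply hf measurableSet_Ici,
      map_gauss_sum hmeas hindep hdist w Finset.univ]
  -- coordinate sums
  have hip : ∀ i j, ⟪v i, v j⟫ = ∑ l, v i l * v j l := by
    intro i j
    simp [PiLp.inner_apply, RCLike.inner_apply]
    exact Finset.sum_congr rfl fun l _ => mul_comm _ _
  have hnorm1 : ∀ i, ∑ l, v i l * v i l = 1 := by
    intro i
    have h := real_inner_self_eq_norm_sq (v i)
    rw [hip i i] at h
    rw [h, hunit i, one_pow]
  -- vertex events
  set f : Fin n → Ω → ℝ := fun i ω => ∑ j, v i j * r j ω with hf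
  have hfm : ∀ i, Measurable (f i) := fun i =>
    Finset.measurable_sum _ fun j _ => (hmeas j).const_mul _
  set S : Fin n → Set Ω := fun i => {ω | c ≤ f i ω} with hS
  have hSm : ∀ i, MeasurableSet (S i) := fun i => measurableSet_le measurable_const (hfm i)
  have hSprob : ∀ i, (μ (S i)).toReal = N c := by
    intro i
    have hvar : (∑ l, ‖v i l‖₊ ^ 2 : ℝ≥0) = 1 := by
      ext
      push_cast
      simp_rw [Real.norm_eq_abs, sq_abs, sq]
      rw [hnorm1 i]
    rw [hN c, hS,
      show μ {ω | c ≤ f i ω} = gaussianReal 0 (∑ l, ‖v i l‖₊ ^ 2) (Set.Ici c) from key (v i) c,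
      hvar]
  -- edge events
  set T : Sym2 (Fin n) → Set Ω := fun e => {ω | ∀ i ∈ e, c ≤ f i ω} with hT
  have hTpair : ∀ i j, T s(i, j) = S i ∩ S j := by
    intro i j
    ext ω
    simp [hT, hS, Sym2.mem_iff, or_imp, forall_and, forall_eq]
  have hTm : ∀ e, MeasurableSet (T e) := by
    intro e
    induction e using Sym2.ind with
    | _ i j => rw [hTpair]; exact (hSm i).inter (hSm j)
  have hedge : ∀ e ∈ G.edgeFinset, (μ (T e)).toReal ≤ N (a * c) := by
    intro e
    induction e using Sym2.ind with
    | _ i j =>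
      intro he
      have hadj : G.Adj i j := by rwa [SimpleGraph.mem_edgeFinset, SimpleGraph.mem_edgeSet] at he
      set w : Fin n → ℝ := fun l => v i l + v j l with hw
      set V : ℝ≥0 := ∑ l, ‖w l‖₊ ^ 2 with hV
      have hVval : (V : ℝ) = 2 + 2 * ⟪v i, v j⟫ := by
        rw [hV]
        push_cast
        simp_rw [Real.norm_eq_abs, sq_abs, hw]
        have expand : ∀ l, (v i l + v j l) ^ 2
            = v i l * v i l + 2 * (v i l * v j l) + v j l * v j l := fun l => by ring
        simp_rw [sq]
        calc ∑ l, (v i l + v j l) * (v i l + v j l)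
            = ∑ l, (v i l * v i l + 2 * (v i l * v j l) + v j l * v j l) :=
              Finset.sum_congr rfl fun l _ => by ring
          _ = (∑ l, v i l * v i l) + 2 * (∑ l, v i l * v j l) + ∑ l, v j l * v j l := by
              rw [Finset.sum_add_distrib, Finset.sum_add_distrib, ← Finset.mul_sum]
          _ = 2 + 2 * ⟪v i, v j⟫ := by rw [hnorm1 i, hnorm1 j, ← hip i j]; ring
      have hVle : (V : ℝ) ≤ 2 * (k - 2) / (k - 1) := by
        have hle := hvc i j hadj
        have h' : ⟪v i, v j⟫ * (k - 1) ≤ -1 := by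
          have := (le_div_iff₀ hk1).mp hle
          linarith [this]
        rw [hVval, le_div_iff₀ hk1]
        nlinarith [h']
      have hsub : T s(i, j) ⊆ {ω | 2 * c ≤ ∑ l, w l * r l ω} := by
        intro ω hω
        rw [hTpair] at hω
        have h1 : c ≤ f i ω := hω.1
        have h2 : c ≤ f j ω := hω.2
        have : ∑ l, w l * r l ω = f i ω + f j ω := by
          rw [hf, hw, ← Finset.sum_add_distrib]
          exact Finset.sum_congr rfl fun l _ => by ring
        simp only [Set.mem_setOf_eq, this]
        linarith
      have hμT : μ (T s(i, j)) ≤ gaussianReal 0 V (Set.Ici (2 * c)) := by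
        rw [← key w (2 * c)]
        exact measure_mono hsub
      by_cases hV0 : V = 0
      · have : gaussianReal 0 V (Set.Ici (2 * c)) = 0 := by
          rw [hV0, gaussianReal_zero_var, Measure.dirac_apply' _ measurableSet_Ici]
          simp [Set.indicator, Set.mem_Ici]
          linarith
        rw [this] at hμT
        have : μ (T s(i, j)) = 0 := le_antisymm hμT (by simp)
        rw [this]
        simpa using hNnonneg (a * c)
      · have hVpos : (0:ℝ) < V := NNReal.coe_pos.mpr (Ne.bot_lt hV0)
        have hσpos : (0:ℝ) < Real.sqrt V := Real.sqrt_pos.mpr hVpos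
        have step1 : (μ (T s(i, j))).toReal ≤ N (2 * c / Real.sqrt V) := by
          rw [hN]
          refine ENNReal.toReal_mono (measure_ne_top _ _) ?_
          rw [← gauss_Ici_scale hV0]
          exact hμT
        have haσ : a * Real.sqrt V ≤ 2 := by
          have h1 : a * Real.sqrt V = Real.sqrt (2 * (k - 1) / (k - 2) * V) := by
            rw [Real.sqrt_mul (by positivity) (V : ℝ)]
          have h2 : 2 * (k - 1) / (k - 2) * (V : ℝ)
              ≤ 2 * (k - 1) / (k - 2) * (2 * (k - 2) / (k - 1)) :=
            mul_le_mul_of_nonneg_left hVle (by positivity)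
          have h3 : 2 * (k - 1) / (k - 2) * (2 * (k - 2) / (k - 1)) = 4 := by
            field_simp
            ring
          rw [h1]
          calc Real.sqrt (2 * (k - 1) / (k - 2) * V)
              ≤ Real.sqrt 4 := Real.sqrt_le_sqrt (by rw [h3] at h2; exact h2)
            _ = 2 := by rw [show (4:ℝ) = 2 ^ 2 by norm_num, Real.sqrt_sq (by norm_num)]
        have hac : a * c ≤ 2 * c / Real.sqrt V := by
          rw [le_div_iff₀ hσpos]
          nlinarith [Real.sqrt_nonneg ((2 : ℝ) * (k - 1) / (k - 2)), hc.le]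
        exact step1.trans (hNanti _ _ hac)
  -- rewrite counts as sums of indicators
  have hrep : ∀ ω, (n' ω : ℝ) - (m' ω : ℝ) =
      (∑ i, Set.indicator (S i) (fun _ => (1:ℝ)) ω) -
        (∑ e ∈ G.edgeFinset, Set.indicator (T e) (fun _ => (1:ℝ)) ω) := by
    intro ω
    congr 1
    · rw [hn' ω, Finset.card_filter]
      push_cast
      refine Finset.sum_congr rfl fun i _ => ?_
      by_cases h : ω ∈ S i
      · rw [Set.indicator_of_mem h]
        exact if_pos h
      · rw [Set.indicator_of_notMem h]
        exact if_neg h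
    · rw [hm' ω, Finset.card_filter]
      push_cast
      refine Finset.sum_congr rfl fun e _ => ?_
      by_cases h : ω ∈ T e
      · rw [Set.indicator_of_mem h]
        exact if_pos h
      · rw [Set.indicator_of_notMem h]
        exact if_neg h
  have hSint : ∀ i, Integrable (fun ω => Set.indicator (S i) (fun _ => (1:ℝ)) ω) μ :=
    fun i => (integrable_const (1:ℝ)).indicator (hSm i)
  have hTint : ∀ e, Integrable (fun ω => Set.indicator (T e) (fun _ => (1:ℝ)) ω) μ :=
    fun e => (integrable_const (1:ℝ)).indicator (hTm e)
  have hFint : Integrable (fun ω => ∑ i, Set.indicator (S i) (fun _ => (1:ℝ)) ω) μ :=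
    integrable_finset_sum _ fun i _ => hSint i
  have hGint : Integrable
      (fun ω => ∑ e ∈ G.edgeFinset, Set.indicator (T e) (fun _ => (1:ℝ)) ω) μ :=
    integrable_finset_sum _ fun e _ => hTint e
  have hval : ∫ ω, ((n' ω : ℝ) - (m' ω : ℝ)) ∂μ =
      (∑ i, (μ (S i)).toReal) - ∑ e ∈ G.edgeFinset, (μ (T e)).toReal := by
    calc ∫ ω, ((n' ω : ℝ) - (m' ω : ℝ)) ∂μ
        = ∫ ω, ((∑ i, Set.indicator (S i) (fun _ => (1:ℝ)) ω) -
            (∑ e ∈ G.edgeFinset, Set.indicator (T e) (fun _ => (1:ℝ)) ω)) ∂μ :=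
          integral_congr_ae (Filter.Eventually.of_forall hrep)
      _ = (∫ ω, ∑ i, Set.indicator (S i) (fun _ => (1:ℝ)) ω ∂μ) -
            ∫ ω, ∑ e ∈ G.edgeFinset, Set.indicator (T e) (fun _ => (1:ℝ)) ω ∂μ :=
          integral_sub hFint hGint
      _ = (∑ i, (μ (S i)).toReal) - ∑ e ∈ G.edgeFinset, (μ (T e)).toReal := by
          rw [integral_finset_sum _ (fun i _ => hSint i),
            integral_finset_sum _ (fun e _ => hTint e)]
          congr 1
          · exact Finset.sum_congr rfl fun i _ => by
              rw [integral_indicator_const (1:ℝ) (hSm i), smul_eq_mul, mul_one]; rfl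
          · exact Finset.sum_congr rfl fun e _ => by
              rw [integral_indicator_const (1:ℝ) (hTm e), smul_eq_mul, mul_one]; rfl
  have h1 : ∑ i, (μ (S i)).toReal = (n : ℝ) * N c := by
    rw [Finset.sum_congr rfl fun i _ => hSprob i, Finset.sum_const, Finset.card_univ,
      Fintype.card_fin, nsmul_eq_mul]
  have hcard : (G.edgeFinset.card : ℝ) ≤ (n : ℝ) * Δ / 2 := by
    have hdeg : ∑ i, G.degree i ≤ n * Δ := by
      calc ∑ i, G.degree i ≤ ∑ _i : Fin n, Δ :=
            Finset.sum_le_sum fun i _ => le_trans (G.degree_le_maxDegree i) hΔ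
        _ = n * Δ := by rw [Finset.sum_const, Finset.card_univ, Fintype.card_fin, smul_eq_mul]
    have h2E : 2 * G.edgeFinset.card ≤ n * Δ := by
      rw [← SimpleGraph.sum_degrees_eq_twice_card_edges]
      exact hdeg
    have := (Nat.cast_le (α := ℝ)).mpr h2E
    push_cast at this
    linarith
  have h2 : ∑ e ∈ G.edgeFinset, (μ (T e)).toReal ≤ (n : ℝ) * Δ / 2 * N (a * c) := by
    calc ∑ e ∈ G.edgeFinset, (μ (T e)).toReal ≤ ∑ _e ∈ G.edgeFinset, N (a * c) :=
          Finset.sum_le_sum hedge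
      _ = (G.edgeFinset.card : ℝ) * N (a * c) := by rw [Finset.sum_const, nsmul_eq_mul]
      _ ≤ (n : ℝ) * Δ / 2 * N (a * c) :=
          mul_le_mul_of_nonneg_right hcard (hNnonneg _)
  have hring : (n : ℝ) * (N c - (Δ : ℝ) / 2 * N (a * c))
      = (n : ℝ) * N c - (n : ℝ) * Δ / 2 * N (a * c) := by ring
  rw [hval, hring, ← h1]
  linarith
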